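/- arXiv:2103.08363 — 7 statements merged into one kernel-verified Lean document; each statement's English description precedes it below -/
import Mathlib

section
/- The function f(z) = (2e^{3z+2} + 3e^{-(3z+2)})/2 satisfies f(z)^2 - (1/36)(f'(z+c) - f'(z))^2 = 6 for all z ∈ ℂ, where c = πi. -/
open Complex Real

theorem stmt_0 (f : ℂ → ℂ)
    (hf : ∀ z : ℂ, f z = (2 * Complex.exp (3 * z + 2) + 3 * Complex.exp (-(3 * z + 2))) / 2)
    (c : ℂ) (hc : c = Real.pi * Complex.I) :
    ∀ z : ℂ, (f z) ^ 2 - (1 / 36) * (deriv f (z + c) - deriv f z) ^ 2 = 6 := by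
  have hfe : f = fun z => (2 * Complex.exp (3 * z + 2) + 3 * Complex.exp (-(3 * z + 2))) / 2 :=
    funext hf
  have hd : ∀ z : ℂ, deriv f z =
      3 * Complex.exp (3 * z + 2) - (9/2) * Complex.exp (-(3 * z + 2)) := by
    intro z
    have h1 : HasDerivAt (fun z : ℂ => 3 * z + 2) 3 z := by
      simpa using ((hasDerivAt_id z).const_mul (3:ℂ)).add_const 2
    have h2 : HasDerivAt (fun z : ℂ => Complex.exp (3 * z + 2)) (Complex.exp (3*z+2) * 3) z :=
      h1.cexp
    have h3 : HasDerivAt (fun z : ℂ => -(3 * z + 2)) (-3) z := h1.neg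
    have h4 : HasDerivAt (fun z : ℂ => Complex.exp (-(3 * z + 2)))
        (Complex.exp (-(3*z+2)) * (-3)) z := h3.cexp
    have h5 : HasDerivAt f
        (((2:ℂ) * (Complex.exp (3*z+2) * 3) + 3 * (Complex.exp (-(3*z+2)) * (-3))) / 2) z := by
      rw [hfe]
      exact ((h2.const_mul 2).add (h4.const_mul 3)).div_const 2
    rw [h5.deriv]; ring
  intro z
  have hexp : Complex.exp (3 * (z + c) + 2) = - Complex.exp (3 * z + 2) := by
    have : (3 : ℂ) * (z + c) + 2 = ((3 * z + 2) + ↑Real.pi * Complex.I + ↑Real.pi * Complex.I) + ↑Real.pi * Complex.I := by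
      rw [hc]; ring
    rw [this, Complex.exp_add, Complex.exp_add, Complex.exp_add, Complex.exp_pi_mul_I]
    ring
  have hexp2 : Complex.exp (-(3 * (z + c) + 2)) = - Complex.exp (-(3 * z + 2)) := by
    have : -((3:ℂ) * (z + c) + 2) = ((-(3 * z + 2)) + -(↑Real.pi * Complex.I) + -(↑Real.pi * Complex.I)) + -(↑Real.pi * Complex.I) := by
      rw [hc]; ring
    have hpi : Complex.exp (-(↑Real.pi * Complex.I)) = -1 := by
      rw [Complex.exp_neg, Complex.exp_pi_mul_I]; norm_num
    rw [this, Complex.exp_add, Complex.exp_add, Complex.exp_add, hpi]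
    ring
  rw [hf z, hd, hd, hexp, hexp2, Complex.exp_neg]
  have h := Complex.exp_ne_zero (3 * z + 2)
  field_simp
  ring
end

section
/- Let α, β ∈ ℂ \ {0}, a, b, c ∈ ℂ with a ≠ 0, c ≠ 0, and e^{ac} = 1. Then the function f(z) = (αz·e^{az+b} + βz·e^{-(az+b)})/2 satisfies f(z)^2 - (z^2/(a^2c^2))(f'(z+c) - f'(z))^2 = αβz^2 for all z ∈ ℂ. -/
open Complex

theorem stmt_1 (α β a b c : ℂ) (hα : α ≠ 0) (hβ : β ≠ 0) (ha : a ≠ 0) (hc : c ≠ 0)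
    (hac : Complex.exp (a * c) = 1) (f : ℂ → ℂ)
    (hf : ∀ z : ℂ, f z = (α * z * Complex.exp (a * z + b) + β * z * Complex.exp (-(a * z + b))) / 2) :
    ∀ z : ℂ, (f z) ^ 2 - (z ^ 2 / (a ^ 2 * c ^ 2)) * (deriv f (z + c) - deriv f z) ^ 2
      = α * β * z ^ 2 := by
  have hfe : f = fun z => (α * z * Complex.exp (a * z + b) + β * z * Complex.exp (-(a * z + b))) / 2 :=
    funext hf
  have hder : ∀ w : ℂ, deriv f w =
      (α * (Complex.exp (a * w + b) + w * (Complex.exp (a * w + b) * a)) +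
        β * (Complex.exp (-(a * w + b)) + w * (Complex.exp (-(a * w + b)) * -a))) / 2 := by
    intro w
    have h1 : HasDerivAt (fun z : ℂ => a * z + b) a w := by
      simpa using ((hasDerivAt_id w).const_mul a).add_const b
    have h2 : HasDerivAt (fun z : ℂ => Complex.exp (a * z + b))
        (Complex.exp (a * w + b) * a) w := h1.cexp
    have h3 : HasDerivAt (fun z : ℂ => Complex.exp (-(a * z + b)))
        (Complex.exp (-(a * w + b)) * -a) w := by
      simpa using h1.neg.cexp
    have h4 : HasDerivAt (fun z : ℂ => z * Complex.exp (a * z + b))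
        (1 * Complex.exp (a * w + b) + w * (Complex.exp (a * w + b) * a)) w :=
      (hasDerivAt_id w).mul h2
    have h5 : HasDerivAt (fun z : ℂ => z * Complex.exp (-(a * z + b)))
        (1 * Complex.exp (-(a * w + b)) + w * (Complex.exp (-(a * w + b)) * -a)) w :=
      (hasDerivAt_id w).mul h3
    have h6 := ((h4.const_mul α).add (h5.const_mul β)).div_const 2
    have hfun : (fun z => (α * z * Complex.exp (a * z + b) + β * z * Complex.exp (-(a * z + b))) / 2)
        = (fun x => (α * (x * Complex.exp (a * x + b)) + β * (x * Complex.exp (-(a * x + b)))) / 2) := by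
      funext x; ring
    rw [hfe, hfun, HasDerivAt.deriv (f := fun x => (α * (x * Complex.exp (a * x + b)) + β * (x * Complex.exp (-(a * x + b)))) / 2) h6]; ring
  intro z
  have hE : Complex.exp (a * (z + c) + b) = Complex.exp (a * z + b) := by
    have : a * (z + c) + b = (a * z + b) + a * c := by ring
    rw [this, Complex.exp_add, hac, mul_one]
  have hEn : Complex.exp (-(a * (z + c) + b)) = Complex.exp (-(a * z + b)) := by
    rw [Complex.exp_neg, Complex.exp_neg, hE]
  rw [hf, hder, hder, hE, hEn]
  rw [Complex.exp_neg]
  field_simp [Complex.exp_ne_zero]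
  ring_nf
end

section
/- The function f(z) = (e^{2z+3} + e^{-(2z+3)})/2 satisfies f(z)^2 - (1/2^7)(f''(z+c) + 3f''(z))^2 = 1 for all z ∈ ℂ, whenever c ∈ ℂ satisfies e^{2c} = -3 + 2√2. -/
open Complex

lemma aux_d1 (z : ℂ) :
    HasDerivAt (fun z : ℂ => (Complex.exp (2 * z + 3) + Complex.exp (-(2 * z + 3))) / 2)
      ((2 * Complex.exp (2 * z + 3) + (-2) * Complex.exp (-(2 * z + 3))) / 2) z := by
  have h1 : HasDerivAt (fun z : ℂ => 2 * z + 3) 2 z :=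
    by simpa using ((hasDerivAt_id z).const_mul 2).add_const 3
  have h2 : HasDerivAt (fun z : ℂ => Complex.exp (2 * z + 3)) (Complex.exp (2 * z + 3) * 2) z :=
    h1.cexp
  have h3 : HasDerivAt (fun z : ℂ => -(2 * z + 3)) (-2) z := h1.neg
  have h4 : HasDerivAt (fun z : ℂ => Complex.exp (-(2 * z + 3)))
      (Complex.exp (-(2 * z + 3)) * (-2)) z := h3.cexp
  have := (h2.add h4).div_const 2
  convert this using 1
  exacts [rfl, rfl, rfl, by ring]

lemma aux_d2 (z : ℂ) :
    iteratedDeriv 2 (fun z : ℂ => (Complex.exp (2 * z + 3) + Complex.exp (-(2 * z + 3))) / 2) z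
      = 2 * Complex.exp (2 * z + 3) + 2 * Complex.exp (-(2 * z + 3)) := by
  have hd1 : deriv (fun z : ℂ => (Complex.exp (2 * z + 3) + Complex.exp (-(2 * z + 3))) / 2)
      = fun z => Complex.exp (2 * z + 3) - Complex.exp (-(2 * z + 3)) := by
    funext w
    have := (aux_d1 w).deriv
    rw [this]; ring
  rw [iteratedDeriv_succ, iteratedDeriv_one, hd1]
  have h1 : HasDerivAt (fun z : ℂ => 2 * z + 3) 2 z :=
    by simpa using ((hasDerivAt_id z).const_mul 2).add_const 3
  have h2 : HasDerivAt (fun z : ℂ => Complex.exp (2 * z + 3)) (Complex.exp (2 * z + 3) * 2) z :=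
    h1.cexp
  have h4 : HasDerivAt (fun z : ℂ => Complex.exp (-(2 * z + 3)))
      (Complex.exp (-(2 * z + 3)) * (-2)) z := h1.neg.cexp
  have := (h2.sub h4).deriv
  exact this.trans (by ring)

theorem stmt_2 (f : ℂ → ℂ)
    (hf : ∀ z : ℂ, f z = (Complex.exp (2 * z + 3) + Complex.exp (-(2 * z + 3))) / 2)
    (c : ℂ) (hc : Complex.exp (2 * c) = -3 + 2 * Real.sqrt 2) :
    ∀ z : ℂ, (f z) ^ 2
      - (1 / 2 ^ 7) * (iteratedDeriv 2 f (z + c) + 3 * iteratedDeriv 2 f z) ^ 2 = 1 := by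
  intro z
  have hfe : f = fun z : ℂ => (Complex.exp (2 * z + 3) + Complex.exp (-(2 * z + 3))) / 2 :=
    funext hf
  rw [hf z, hfe]
  rw [aux_d2, aux_d2]
  set s : ℂ := ((Real.sqrt 2 : ℝ) : ℂ) with hs
  have hs2 : s ^ 2 = 2 := by
    rw [hs]
    norm_cast
    rw [sq]
    exact_mod_cast Real.mul_self_sqrt (by norm_num)
  set E := Complex.exp (2 * z + 3) with hE
  have hEne : E ≠ 0 := Complex.exp_ne_zero _
  have hEinv : Complex.exp (-(2 * z + 3)) = E⁻¹ := by rw [hE, ← Complex.exp_neg]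
  have hA : Complex.exp (2 * (z + c) + 3) = E * (-3 + 2 * s) := by
    rw [hE, ← hc, ← Complex.exp_add]; ring_nf
  have hAinv : Complex.exp (-(2 * (z + c) + 3)) = E⁻¹ * (-3 - 2 * s) := by
    have h1 : Complex.exp (-(2 * (z + c) + 3)) = (Complex.exp (2 * (z + c) + 3))⁻¹ := by
      rw [← Complex.exp_neg]
    rw [h1, hA, mul_inv]
    have hne : (-3 + 2 * s : ℂ) ≠ 0 := by
      intro h
      have : (2 * s) ^ 2 = 9 := by
        have : (2 : ℂ) * s = 3 := by linear_combination h
        rw [this]; norm_num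
      rw [mul_pow, hs2] at this
      norm_num at this
    have : (-3 + 2 * s : ℂ)⁻¹ = -3 - 2 * s :=
      inv_eq_of_mul_eq_one_right (by linear_combination (-4 : ℂ) * hs2)
    rw [this]
  rw [hEinv, hA, hAinv]
  have hEE : E * E⁻¹ = 1 := mul_inv_cancel₀ hEne
  linear_combination (-(E - E⁻¹) ^ 2 / 8) * hs2 + hEE
end

section
/- The function f(z) = (e^{3z+4} + e^{-(3z+4)})/2 satisfies f(z)^2 - (1/144)(5f'(z+c) + f'''(z))^2 = 1 for all z ∈ ℂ, whenever c ∈ ℂ satisfies e^{3c} = -1. -/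
open Complex

lemma key_hd (A B : ℂ) (z : ℂ) :
    HasDerivAt (fun z => A * Complex.exp (3 * z + 4) + B * Complex.exp (-(3 * z + 4)))
      (3 * A * Complex.exp (3 * z + 4) + -(3 * B) * Complex.exp (-(3 * z + 4))) z := by
  have h1 : HasDerivAt (fun z : ℂ => 3 * z + 4) 3 z := by
    simpa using ((hasDerivAt_id z).const_mul 3).add_const 4
  have h1' : HasDerivAt (fun z : ℂ => -(3 * z + 4)) (-3) z := h1.neg
  have h2 : HasDerivAt (fun z : ℂ => Complex.exp (3 * z + 4))
      (Complex.exp (3 * z + 4) * 3) z := (Complex.hasDerivAt_exp _).comp z h1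
  have h3 : HasDerivAt (fun z : ℂ => Complex.exp (-(3 * z + 4)))
      (Complex.exp (-(3 * z + 4)) * (-3)) z := (Complex.hasDerivAt_exp _).comp z h1'
  have := (h2.const_mul A).add (h3.const_mul B)
  exact this.congr_deriv (by ring)

lemma key_deriv (A B : ℂ) :
    deriv (fun z => A * Complex.exp (3 * z + 4) + B * Complex.exp (-(3 * z + 4)))
      = fun z => (3 * A) * Complex.exp (3 * z + 4) + (-(3 * B)) * Complex.exp (-(3 * z + 4)) := by
  funext z
  exact (key_hd A B z).deriv

theorem stmt_3 (f : ℂ → ℂ)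
    (hf : ∀ z : ℂ, f z = (Complex.exp (3 * z + 4) + Complex.exp (-(3 * z + 4))) / 2)
    (c : ℂ) (hc : Complex.exp (3 * c) = -1) :
    ∀ z : ℂ, (f z) ^ 2
      - (1 / 144) * (5 * deriv f (z + c) + iteratedDeriv 3 f z) ^ 2 = 1 := by
  have hfe : f = fun z => (1/2 : ℂ) * Complex.exp (3 * z + 4)
      + (1/2 : ℂ) * Complex.exp (-(3 * z + 4)) := by
    funext z; rw [hf z]; ring
  have hd1 : deriv f = fun z => (3/2 : ℂ) * Complex.exp (3 * z + 4)
      + (-(3/2) : ℂ) * Complex.exp (-(3 * z + 4)) := by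
    rw [hfe, key_deriv]; norm_num
  have hd2 : iteratedDeriv 2 f = fun z => (9/2 : ℂ) * Complex.exp (3 * z + 4)
      + (-(-(9/2)) : ℂ) * Complex.exp (-(3 * z + 4)) := by
    rw [iteratedDeriv_succ, iteratedDeriv_one, hd1, key_deriv]
    norm_num
  have hd3 : iteratedDeriv 3 f = fun z => (27/2 : ℂ) * Complex.exp (3 * z + 4)
      + (-(27/2) : ℂ) * Complex.exp (-(3 * z + 4)) := by
    rw [iteratedDeriv_succ, hd2, key_deriv]
    norm_num
  intro z
  rw [hf z, hd1, hd3]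
  simp only
  have e1 : Complex.exp (3 * (z + c) + 4)
      = Complex.exp (3 * z + 4) * Complex.exp (3 * c) := by
    rw [← Complex.exp_add]; ring_nf
  have e2 : Complex.exp (-(3 * (z + c) + 4))
      = Complex.exp (-(3 * z + 4)) * Complex.exp (-(3 * c)) := by
    rw [← Complex.exp_add]; ring_nf
  have hcinv : Complex.exp (-(3 * c)) = -1 := by
    rw [Complex.exp_neg, hc]; norm_num
  rw [e1, e2, hc, hcinv]
  have hu : Complex.exp (-(3 * z + 4)) = (Complex.exp (3 * z + 4))⁻¹ := Complex.exp_neg _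
  rw [hu]
  have hne : Complex.exp (3 * z + 4) ≠ 0 := Complex.exp_ne_zero _
  field_simp
  ring_nf
end

section
/- The function f(z) = (e^{z+2} + e^{-(z+2)})/2 satisfies f(z)^2 - (1/(8+6i))(f''(z+c) + 3f'''(z))^2 = 1 for all z ∈ ℂ, whenever c ∈ ℂ satisfies e^c = i. -/
open Complex

private noncomputable def gC : ℂ → ℂ := fun z => (Complex.exp (z + 2) + Complex.exp (-(z + 2))) / 2
private noncomputable def sC : ℂ → ℂ := fun z => (Complex.exp (z + 2) - Complex.exp (-(z + 2))) / 2

private lemma hasDeriv_g (z : ℂ) : HasDerivAt gC (sC z) z := by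
  have h1 : HasDerivAt (fun z : ℂ => z + 2) 1 z := (hasDerivAt_id z).add_const 2
  have h2 := (Complex.hasDerivAt_exp (z + 2)).comp z h1
  have h3 : HasDerivAt (fun z : ℂ => -(z + 2)) (-1) z := h1.neg
  have h4 := (Complex.hasDerivAt_exp (-(z + 2))).comp z h3
  have := (h2.add h4).div_const 2
  refine this.congr_deriv ?_
  simp [sC]
  ring

private lemma hasDeriv_s (z : ℂ) : HasDerivAt sC (gC z) z := by
  have h1 : HasDerivAt (fun z : ℂ => z + 2) 1 z := (hasDerivAt_id z).add_const 2
  have h2 := (Complex.hasDerivAt_exp (z + 2)).comp z h1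
  have h3 : HasDerivAt (fun z : ℂ => -(z + 2)) (-1) z := h1.neg
  have h4 := (Complex.hasDerivAt_exp (-(z + 2))).comp z h3
  have := (h2.sub h4).div_const 2
  refine this.congr_deriv ?_
  simp [gC]

theorem stmt_4 (f : ℂ → ℂ)
    (hf : ∀ z : ℂ, f z = (Complex.exp (z + 2) + Complex.exp (-(z + 2))) / 2)
    (c : ℂ) (hc : Complex.exp c = Complex.I) :
    ∀ z : ℂ, (f z) ^ 2
      - (1 / (8 + 6 * Complex.I)) * (iteratedDeriv 2 f (z + c) + 3 * iteratedDeriv 3 f z) ^ 2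
      = 1 := by
  have hfg : f = gC := funext fun z => hf z
  subst hfg
  have hdg : deriv gC = sC := funext fun z => (hasDeriv_g z).deriv
  have hds : deriv sC = gC := funext fun z => (hasDeriv_s z).deriv
  have h2 : iteratedDeriv 2 gC = gC := by
    rw [iteratedDeriv_succ, iteratedDeriv_one, hdg, hds]
  have h3 : iteratedDeriv 3 gC = sC := by
    rw [iteratedDeriv_succ, h2, hdg]
  intro z
  rw [h2, h3]
  simp only [gC, sC]
  have e1 : Complex.exp (z + c + 2) = Complex.I * Complex.exp (z + 2) := by
    rw [← hc, ← Complex.exp_add]; ring_nf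
  have e2 : Complex.exp (-(z + c + 2)) = -Complex.I * Complex.exp (-(z + 2)) := by
    have : Complex.exp (-(z + c + 2)) = Complex.exp (-c) * Complex.exp (-(z + 2)) := by
      rw [← Complex.exp_add]; ring_nf
    rw [this, Complex.exp_neg, hc, Complex.inv_I]
  have e3 : Complex.exp (z + 2) * Complex.exp (-(z + 2)) = 1 := by
    rw [← Complex.exp_add, show z + 2 + -(z + 2) = 0 by ring, Complex.exp_zero]
  rw [e1, e2]
  have hne : (8 : ℂ) + 6 * Complex.I ≠ 0 := by
    intro h
    have := congrArg Complex.re h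
    simp at this
  set X := Complex.exp (z + 2) with hX
  set Y := Complex.exp (-(z + 2)) with hY
  have h5 : ((Complex.I * X + -Complex.I * Y) / 2 + 3 * ((X - Y) / 2)) ^ 2
      = (8 + 6 * Complex.I) * ((X - Y) ^ 2 / 4) := by
    linear_combination (X - Y) ^ 2 / 4 * Complex.I_sq
  rw [h5]
  field_simp
  linear_combination (16 : ℂ) * e3
end

section
/- The function f(z) = (e^{2z+1} + e^{-(2z+1)})/2 satisfies f(z)^2 - (1/100)(3f'(z+c) + 2f''(z))^2 = 1 for all z ∈ ℂ, whenever c ∈ ℂ satisfies e^{2c} = 1/3. -/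
open Complex

theorem stmt_5 (f : ℂ → ℂ)
    (hf : ∀ z : ℂ, f z = (Complex.exp (2 * z + 1) + Complex.exp (-(2 * z + 1))) / 2)
    (c : ℂ) (hc : Complex.exp (2 * c) = 1 / 3) :
    ∀ z : ℂ, (f z) ^ 2
      - (1 / 100) * (3 * deriv f (z + c) + 2 * iteratedDeriv 2 f z) ^ 2 = 1 := by
  have hfe : f = fun z => (Complex.exp (2 * z + 1) + Complex.exp (-(2 * z + 1))) / 2 :=
    funext hf
  have h1 : ∀ z : ℂ, HasDerivAt f (Complex.exp (2 * z + 1) - Complex.exp (-(2 * z + 1))) z := by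
    intro z
    rw [hfe]
    have ha : HasDerivAt (fun z : ℂ => Complex.exp (2 * z + 1))
        (Complex.exp (2 * z + 1) * 2) z := by
      have : HasDerivAt (fun z : ℂ => 2 * z + 1) 2 z := by
        simpa using ((hasDerivAt_id z).const_mul (2 : ℂ)).add_const 1
      exact this.cexp
    have hb : HasDerivAt (fun z : ℂ => Complex.exp (-(2 * z + 1)))
        (Complex.exp (-(2 * z + 1)) * (-2)) z := by
      have : HasDerivAt (fun z : ℂ => -(2 * z + 1)) (-2) z := by
        exact (show HasDerivAt (fun z : ℂ => 2 * z + 1) 2 z by simpa using ((hasDerivAt_id z).const_mul (2 : ℂ)).add_const 1).neg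
      exact this.cexp
    have := (ha.add hb).div_const 2
    convert this using 1
    exacts [rfl, rfl, rfl, by ring]
  have hd1 : deriv f = fun z => Complex.exp (2 * z + 1) - Complex.exp (-(2 * z + 1)) :=
    funext fun z => (h1 z).deriv
  have h2 : ∀ z : ℂ, deriv (deriv f) z
      = 2 * Complex.exp (2 * z + 1) + 2 * Complex.exp (-(2 * z + 1)) := by
    intro z
    rw [hd1]
    have ha : HasDerivAt (fun z : ℂ => Complex.exp (2 * z + 1))
        (Complex.exp (2 * z + 1) * 2) z := by
      have : HasDerivAt (fun z : ℂ => 2 * z + 1) 2 z := by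
        simpa using ((hasDerivAt_id z).const_mul (2 : ℂ)).add_const 1
      exact this.cexp
    have hb : HasDerivAt (fun z : ℂ => Complex.exp (-(2 * z + 1)))
        (Complex.exp (-(2 * z + 1)) * (-2)) z := by
      have : HasDerivAt (fun z : ℂ => -(2 * z + 1)) (-2) z := by
        exact (show HasDerivAt (fun z : ℂ => 2 * z + 1) 2 z by simpa using ((hasDerivAt_id z).const_mul (2 : ℂ)).add_const 1).neg
      exact this.cexp
    have := (ha.sub hb).deriv
    exact this.trans (by ring)
  intro z
  simp only [hf, iteratedDeriv_succ, iteratedDeriv_zero]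
  rw [h2]
  simp only [hd1]
  have key1 : Complex.exp (2 * (z + c) + 1) = Complex.exp (2 * z + 1) / 3 := by
    rw [show (2 : ℂ) * (z + c) + 1 = (2 * z + 1) + 2 * c by ring, Complex.exp_add, hc]
    ring
  have key2 : Complex.exp (-(2 * (z + c) + 1)) = 3 * Complex.exp (-(2 * z + 1)) := by
    have h3 : Complex.exp (-(2 * c)) = 3 := by
      rw [Complex.exp_neg, hc]; norm_num
    rw [show -((2 : ℂ) * (z + c) + 1) = -(2 * z + 1) + -(2 * c) by ring, Complex.exp_add, h3]
    ring
  rw [key1, key2]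
  have hmul : Complex.exp (2 * z + 1) * Complex.exp (-(2 * z + 1)) = 1 := by
    rw [← Complex.exp_add, show (2*z+1) + -(2*z+1) = (0:ℂ) by ring, Complex.exp_zero]
  linear_combination hmul
end

section
/- Let Q_1, Q_2 be nonzero complex constants, a, b, c, R ∈ ℂ with a, R ≠ 0, k odd, e^{ac} = -1, and 2iRa^k + 1 = 0. Then f(z) = (Q_1 e^{az+b} + Q_2 e^{-(az+b)})/2 satisfies f(z)^2 + R^2(f^{(k)}(z+c) - f^{(k)}(z))^2 = Q_1 Q_2 for all z ∈ ℂ. -/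
open Complex

lemma aux_iter (a : ℂ) (n : ℕ) : ∀ C₁ C₂ : ℂ,
    iteratedDeriv n (fun z => C₁ * Complex.exp (a * z) + C₂ * Complex.exp (-a * z))
      = fun z => C₁ * a ^ n * Complex.exp (a * z) + C₂ * (-a) ^ n * Complex.exp (-a * z) := by
  induction n with
  | zero => intro C₁ C₂; simp
  | succ n ih =>
    intro C₁ C₂
    rw [iteratedDeriv_succ']
    have hd : deriv (fun z => C₁ * Complex.exp (a * z) + C₂ * Complex.exp (-a * z))
        = fun z => (C₁ * a) * Complex.exp (a * z) + (C₂ * (-a)) * Complex.exp (-a * z) := by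
      funext z
      have e1 : HasDerivAt (fun z : ℂ => Complex.exp (a * z)) (Complex.exp (a * z) * a) z := by
        simpa using (((hasDerivAt_id z).const_mul a).cexp)
      have e2 : HasDerivAt (fun z : ℂ => Complex.exp (-a * z)) (Complex.exp (-a * z) * (-a)) z := by
        simpa using (((hasDerivAt_id z).const_mul (-a)).cexp)
      have := (show HasDerivAt (fun z => C₁ * Complex.exp (a * z) + C₂ * Complex.exp (-a * z)) _ z
        from (e1.const_mul C₁).add (e2.const_mul C₂)).deriv
      rw [this]; ring
    rw [hd, ih]
    funext z; ring

theorem stmt_17 (Q₁ Q₂ a b c R : ℂ) (hQ₁ : Q₁ ≠ 0) (hQ₂ : Q₂ ≠ 0) (ha : a ≠ 0) (hR : R ≠ 0)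
    (k : ℕ) (hk : Odd k) (hac : Complex.exp (a * c) = -1)
    (hRa : 2 * Complex.I * R * a ^ k + 1 = 0) (f : ℂ → ℂ)
    (hf : ∀ z : ℂ, f z = (Q₁ * Complex.exp (a * z + b) + Q₂ * Complex.exp (-(a * z + b))) / 2) :
    ∀ z : ℂ, (f z) ^ 2 + R ^ 2 * (iteratedDeriv k f (z + c) - iteratedDeriv k f z) ^ 2
      = Q₁ * Q₂ := by
  intro z
  have hfe : f = fun z => (Q₁ * Complex.exp b / 2) * Complex.exp (a * z)
      + (Q₂ * Complex.exp (-b) / 2) * Complex.exp (-a * z) := by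
    funext w
    rw [hf w, Complex.exp_add]
    rw [show -(a * w + b) = -a * w + -b by ring, Complex.exp_add]
    ring
  rw [hfe, aux_iter]
  simp only
  have hk' : (-a) ^ k = -(a ^ k) := hk.neg_pow a
  have hEc : Complex.exp (a * (z + c)) = -Complex.exp (a * z) := by
    rw [show a * (z + c) = a * z + a * c by ring, Complex.exp_add, hac]; ring
  have hFc : Complex.exp (-a * (z + c)) = -Complex.exp (-a * z) := by
    have h2 : Complex.exp (-(a * c)) = -1 := by
      rw [Complex.exp_neg, hac]; norm_num
    rw [show -a * (z + c) = -a * z + -(a * c) by ring, Complex.exp_add, h2]; ring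
  rw [hEc, hFc, hk']
  have hEF : Complex.exp (a * z) * Complex.exp (-a * z) = 1 := by
    rw [← Complex.exp_add]; simp
  have hbb : Complex.exp b * Complex.exp (-b) = 1 := by
    rw [← Complex.exp_add]; simp
  have hRk : R ^ 2 * (a ^ k) ^ 2 = -(1/4) := by
    linear_combination (-(1:ℂ)/4) * (2 * Complex.I * R * a ^ k - 1) * hRa
      + R ^ 2 * (a ^ k) ^ 2 * Complex.I_sq
  linear_combination (Q₂ * Complex.exp (-b) * Complex.exp (-a * z)
      - Q₁ * Complex.exp b * Complex.exp (a * z)) ^ 2 * hRk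
    + Q₁ * Q₂ * Complex.exp b * Complex.exp (-b) * hEF
    + Q₁ * Q₂ * hbb
end
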